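/- For every rational α with 0 < α < 1/3, there exist count quadruples e' = (f'₁₁, f'₀₁, f'₁₀, f'₀₀) and e'' = (f''₁₁, f''₀₁, f''₁₀, f''₀₀) of nonnegative rationals, each with both denominators f₁₁+f₀₁ and f₁₀+f₀₀ positive, such that |δ(e')| ≤ α and |δ(e'')| ≤ α but the componentwise sum e = e' + e'' satisfies |δ(e)| > α. Hence non-discrimination (below threshold α) of two subsets does not imply non-discrimination of their union. -/

import Mathlib

/-- The discrimination score of a count quadruple (f₁₁, f₀₁, f₁₀, f₀₀),
defined to be 0 when a contrast denominator is 0. -/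
def delta (f11 f01 f10 f00 : ℚ) : ℚ :=
  if f11 + f01 = 0 ∨ f10 + f00 = 0 then 0
  else f11 / (f11 + f01) - f10 / (f10 + f00)

/-- For every threshold 0 < α < 1/3 there are two count
quadruples, each with positive contrast denominators and score at most α in
absolute value, whose componentwise sum has score exceeding α. -/
theorem fair_subsets_discriminatory_union (α : ℚ) (hα0 : 0 < α) (hα1 : α < 1 / 3) :
    ∃ f'11 f'01 f'10 f'00 f''11 f''01 f''10 f''00 : ℚ,
      0 ≤ f'11 ∧ 0 ≤ f'01 ∧ 0 ≤ f'10 ∧ 0 ≤ f'00 ∧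
      0 ≤ f''11 ∧ 0 ≤ f''01 ∧ 0 ≤ f''10 ∧ 0 ≤ f''00 ∧
      0 < f'11 + f'01 ∧ 0 < f'10 + f'00 ∧
      0 < f''11 + f''01 ∧ 0 < f''10 + f''00 ∧
      |delta f'11 f'01 f'10 f'00| ≤ α ∧
      |delta f''11 f''01 f''10 f''00| ≤ α ∧
      |delta (f'11 + f''11) (f'01 + f''01) (f'10 + f''10) (f'00 + f''00)| > α := by
  refine ⟨1, 0, 1, 0, 0, 1, 0, 11, by norm_num, by norm_num, by norm_num, by norm_num,
    by norm_num, by norm_num, by norm_num, by norm_num, by norm_num, by norm_num,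
    by norm_num, by norm_num, ?_, ?_, ?_⟩
  · simp only [delta]; norm_num; positivity
  · simp only [delta]; norm_num; positivity
  · simp only [delta]; norm_num
    calc α < 1 / 3 := hα1
      _ < (5 : ℚ) / 12 := by norm_num
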